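/- Let u : ℝ² → ℝ be a locally Lipschitz viscosity solution of the Lorentzian eikonal equation g(∇u,∇u) = −1 on the 2-dimensional Minkowski space-time. Then u has past-directed time orientation (∂u/∂x(p) > 0 at every point p where u is differentiable) if and only if u is strictly increasing along every nonconstant future-directed causal curve: for every C¹ curve γ : [a, b] → ℝ² with a < b, γ₁′(t) > 0 and |γ₂′(t)| ≤ γ₁′(t) for all t ∈ [a,b], one has u(γ(b)) > u(γ(a)). -/

import Mathlib

open Set MeasureTheory Filter Topology

set_option maxHeartbeats 1600000

/-- `u` is a viscosity solution of the Lorentzian eikonal equation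
`g(∇u,∇u) = -1` on the open set `O` in 2-dimensional Minkowski space-time
(metric `-dx² + dy²`): for every upper test function `φ` at `p ∈ O`,
`(∂φ/∂x(p))² - (∂φ/∂y(p))² ≥ 1`, and for every lower test function `φ` at `p`,
`(∂φ/∂x(p))² - (∂φ/∂y(p))² ≤ 1`. -/
def IsViscositySolution (u : ℝ × ℝ → ℝ) (O : Set (ℝ × ℝ)) : Prop :=
  (∀ p ∈ O, ∀ φ : ℝ × ℝ → ℝ, ∀ U : Set (ℝ × ℝ),
      IsOpen U → p ∈ U → U ⊆ O → ContDiffOn ℝ 1 φ U → φ p = u p →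
      (∀ x ∈ U, u x ≤ φ x) →
      1 ≤ (fderiv ℝ φ p (1, 0)) ^ 2 - (fderiv ℝ φ p (0, 1)) ^ 2) ∧
  (∀ p ∈ O, ∀ φ : ℝ × ℝ → ℝ, ∀ U : Set (ℝ × ℝ),
      IsOpen U → p ∈ U → U ⊆ O → ContDiffOn ℝ 1 φ U → φ p = u p →
      (∀ x ∈ U, φ x ≤ u x) →
      (fderiv ℝ φ p (1, 0)) ^ 2 - (fderiv ℝ φ p (0, 1)) ^ 2 ≤ 1)

lemma visc_at_diff (u : ℝ × ℝ → ℝ) (hu : Continuous u)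
    (hvisc : IsViscositySolution u Set.univ)
    {p : ℝ × ℝ} (hd : DifferentiableAt ℝ u p) :
    1 ≤ (fderiv ℝ u p (1, 0)) ^ 2 - (fderiv ℝ u p (0, 1)) ^ 2 := by
  classical
  set D := fderiv ℝ u p with hD
  -- the quadratic penalty
  set q : ℝ × ℝ → ℝ := fun x => (x.1 - p.1) ^ 2 + (x.2 - p.2) ^ 2 with hq
  have hqcont : Continuous q := by fun_prop
  have hqnonneg : ∀ x, 0 ≤ q x := fun x => by positivity
  have hqge : ∀ x : ℝ × ℝ, ‖x - p‖ ^ 2 ≤ q x := by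
    intro x
    have h1 : ‖x - p‖ = max |x.1 - p.1| |x.2 - p.2| := by
      rw [Prod.norm_def]; simp [Real.norm_eq_abs]
    rw [h1]
    rcases max_cases |x.1 - p.1| |x.2 - p.2| with ⟨h, _⟩ | ⟨h, _⟩ <;> rw [h] <;>
      simp [hq, sq_abs] <;> nlinarith [sq_nonneg (x.1 - p.1), sq_nonneg (x.2 - p.2)]
  -- maximizers
  have hmax : ∀ n : ℕ, ∃ x ∈ Metric.closedBall p 1,
      ∀ y ∈ Metric.closedBall p 1, u y - D y - n * q y ≤ u x - D x - n * q x := by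
    intro n
    have hc : IsCompact (Metric.closedBall p (1:ℝ)) := isCompact_closedBall p 1
    have hne : (Metric.closedBall p (1:ℝ)).Nonempty := ⟨p, Metric.mem_closedBall_self zero_le_one⟩
    have hcont : ContinuousOn (fun x => u x - D x - n * q x) (Metric.closedBall p 1) := by
      apply Continuous.continuousOn; fun_prop
    obtain ⟨x, hx, hmax⟩ := hc.exists_isMaxOn hne hcont
    exact ⟨x, hx, fun y hy => hmax hy⟩
  choose X hX hXmax using hmax
  -- uniform bound on n * q (X n)
  obtain ⟨M₁, hM₁⟩ := (isCompact_closedBall p (1:ℝ)).exists_bound_of_continuousOn hu.continuousOn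
  have hkey : ∀ n : ℕ, (n:ℝ) * q (X n) ≤ u (X n) - u p - D (X n - p) := by
    intro n
    have h1 := hXmax n p (Metric.mem_closedBall_self zero_le_one)
    have hqp : q p = 0 := by simp [hq]
    have h2 : D (X n - p) = D (X n) - D p := by rw [map_sub]
    rw [hqp] at h1; push_cast at h1 ⊢; linarith
  have hM : ∀ n : ℕ, (n:ℝ) * q (X n) ≤ 2 * M₁ + ‖D‖ := by
    intro n
    have h1 := hM₁ (X n) (hX n)
    have h2 := hM₁ p (Metric.mem_closedBall_self zero_le_one)
    have h3 : ‖D (X n - p)‖ ≤ ‖D‖ * ‖X n - p‖ := D.le_opNorm _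
    have h4 : ‖X n - p‖ ≤ 1 := by
      have := hX n; rw [Metric.mem_closedBall, dist_eq_norm] at this; exact this
    have h5 : ‖D‖ * ‖X n - p‖ ≤ ‖D‖ * 1 := by
      apply mul_le_mul_of_nonneg_left h4 (norm_nonneg _)
    have h6 := hkey n
    have h7 : |D (X n - p)| ≤ ‖D‖ := by
      rw [← Real.norm_eq_abs]; linarith
    rw [Real.norm_eq_abs] at h1 h2
    have := abs_le.1 h1; have := abs_le.1 h2; have := abs_le.1 h7
    linarith [h6]
  -- smallness of the penalty gradient
  have hsmall : ∀ ε > (0:ℝ), ∃ N : ℕ, ∀ n ≥ N, 2 * (n:ℝ) * ‖X n - p‖ ≤ ε := by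
    intro ε hε
    have hlo := hd.hasFDerivAt.isLittleO
    have h4 := hlo.def (show (0:ℝ) < ε/4 by linarith)
    rw [Metric.eventually_nhds_iff] at h4
    obtain ⟨δ, hδpos, hδ⟩ := h4
    set M := 2 * M₁ + ‖D‖ with hMdef
    have hM0 : 0 ≤ M := le_trans (by positivity : (0:ℝ) ≤ (0:ℝ) * q (X 0)) (by simpa using hM 0)
    obtain ⟨N, hN⟩ := exists_nat_gt (M / (min (δ/2) 1)^2)
    refine ⟨N + 1, fun n hn => ?_⟩
    have hn1 : (1:ℝ) ≤ (n:ℝ) := by exact_mod_cast Nat.one_le_iff_ne_zero.2 (by omega)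
    have hnN : (M / (min (δ/2) 1)^2) < (n:ℝ) := lt_of_lt_of_le hN (by exact_mod_cast (by omega : N ≤ n))
    have hmin : 0 < min (δ/2) 1 := lt_min (by linarith) one_pos
    -- first: ‖X n - p‖ ≤ min (δ/2) 1
    have hx2 : ‖X n - p‖^2 ≤ q (X n) := hqge (X n)
    have hb : (n:ℝ) * ‖X n - p‖^2 ≤ M := le_trans (by nlinarith [hqnonneg (X n)]) (hM n)
    have hxsmall : ‖X n - p‖ ≤ min (δ/2) 1 := by
      by_contra hcon
      push_neg at hcon
      have h1 : (min (δ/2) 1)^2 < ‖X n - p‖^2 := by nlinarith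
      rw [div_lt_iff₀ (by positivity)] at hnN
      have h2 : (n:ℝ) * (min (δ/2) 1)^2 ≤ (n:ℝ) * ‖X n - p‖^2 :=
        mul_le_mul_of_nonneg_left h1.le (by positivity)
      linarith
    have hxlt : ‖X n - p‖ < δ := lt_of_le_of_lt (hxsmall.trans (min_le_left _ _)) (by linarith)
    have hd1 : dist (X n) p < δ := by rwa [dist_eq_norm]
    have h5 := hδ hd1
    simp only [Real.norm_eq_abs] at h5
    have h6 : u (X n) - u p - D (X n - p) ≤ (ε/4) * ‖X n - p‖ := le_trans (le_abs_self _) h5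
    have h7 : (n:ℝ) * ‖X n - p‖^2 ≤ (ε/4) * ‖X n - p‖ := by
      have h8 := hkey n
      have h9 : (n:ℝ) * ‖X n - p‖^2 ≤ (n:ℝ) * q (X n) := by nlinarith [hx2]
      linarith
    rcases eq_or_lt_of_le (norm_nonneg (X n - p)) with h0 | h0
    · rw [← h0]; simpa using hε.le
    · nlinarith [mul_pos hε h0]
  set a := D (1, 0) with ha
  set b := D (0, 1) with hb
  set A : ℕ → ℝ := fun n => a + 2 * n * ((X n).1 - p.1) with hA
  set B : ℕ → ℝ := fun n => b + 2 * n * ((X n).2 - p.2) with hB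
  have hnorm : ∀ n : ℕ, ‖X n - p‖ = max |(X n).1 - p.1| |(X n).2 - p.2| := by
    intro n; rw [Prod.norm_def]; simp [Real.norm_eq_abs]
  have hcoord : ∀ n : ℕ, |(X n).1 - p.1| ≤ ‖X n - p‖ ∧ |(X n).2 - p.2| ≤ ‖X n - p‖ := by
    intro n
    rw [hnorm n]
    exact ⟨le_max_left _ _, le_max_right _ _⟩
  have htend : Tendsto (fun n : ℕ => 2 * (n:ℝ) * ‖X n - p‖) atTop (𝓝 0) := by
    rw [Metric.tendsto_atTop]
    intro ε hε
    obtain ⟨N, hN⟩ := hsmall (ε/2) (by linarith)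
    refine ⟨N, fun n hn => ?_⟩
    have := hN n hn
    rw [Real.dist_eq]
    have h0 : 0 ≤ 2 * (n:ℝ) * ‖X n - p‖ := by positivity
    rw [abs_of_nonneg (by linarith)]
    linarith
  have htendA : Tendsto A atTop (𝓝 a) := by
    have h1 : Tendsto (fun n => A n - a) atTop (𝓝 0) := by
      apply squeeze_zero_norm _ htend
      intro n
      have := (hcoord n).1
      simp only [hA, add_sub_cancel_left, Real.norm_eq_abs]
      have h2 : |2 * (n:ℝ) * ((X n).1 - p.1)| = 2 * (n:ℝ) * |(X n).1 - p.1| := by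
        rw [abs_mul, abs_of_nonneg (by positivity : (0:ℝ) ≤ 2 * (n:ℝ))]
      rw [h2]
      exact mul_le_mul_of_nonneg_left this (by positivity)
    have := h1.add_const a
    simpa using this
  have htendB : Tendsto B atTop (𝓝 b) := by
    have h1 : Tendsto (fun n => B n - b) atTop (𝓝 0) := by
      apply squeeze_zero_norm _ htend
      intro n
      have := (hcoord n).2
      simp only [hB, add_sub_cancel_left, Real.norm_eq_abs]
      have h2 : |2 * (n:ℝ) * ((X n).2 - p.2)| = 2 * (n:ℝ) * |(X n).2 - p.2| := by
        rw [abs_mul, abs_of_nonneg (by positivity : (0:ℝ) ≤ 2 * (n:ℝ))]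
      rw [h2]
      exact mul_le_mul_of_nonneg_left this (by positivity)
    have := h1.add_const b
    simpa using this
  -- eventually the viscosity inequality holds
  have hev : ∀ᶠ n : ℕ in atTop, 1 ≤ (A n)^2 - (B n)^2 := by
    obtain ⟨N, hN⟩ := hsmall (1/2) (by norm_num)
    rw [eventually_atTop]
    refine ⟨max N 1, fun n hn => ?_⟩
    have hball : X n ∈ Metric.ball p 1 := by
      rw [Metric.mem_ball, dist_eq_norm]
      have h1 := hN n (le_trans (le_max_left _ _) hn)
      have hn1 : (1:ℝ) ≤ (n:ℝ) := by exact_mod_cast le_trans (le_max_right _ _) hn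
      nlinarith [norm_nonneg (X n - p)]
    set φ : ℝ × ℝ → ℝ := fun x => (u (X n) - D (X n) - n * q (X n)) + (D x + n * q x) with hφ
    have hφcd : ContDiffOn ℝ 1 φ (Metric.ball p 1) := by
      apply ContDiff.contDiffOn
      apply ContDiff.add contDiff_const
      apply ContDiff.add D.contDiff
      apply ContDiff.mul contDiff_const
      apply ContDiff.add
      · exact (contDiff_fst.sub contDiff_const).pow 2
      · exact (contDiff_snd.sub contDiff_const).pow 2
    have hφeq : φ (X n) = u (X n) := by simp only [hφ]; ring
    have hφge : ∀ x ∈ Metric.ball p 1, u x ≤ φ x := by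
      intro x hx
      have := hXmax n x (Metric.ball_subset_closedBall hx)
      simp only [hφ]; linarith
    -- derivative of φ at X n
    have hfst : HasFDerivAt (fun x : ℝ × ℝ => x.1 - p.1) (ContinuousLinearMap.fst ℝ ℝ ℝ) (X n) :=
      (hasFDerivAt_fst (𝕜 := ℝ) (p := X n) (E := ℝ) (F := ℝ)).sub_const p.1
    have hsnd : HasFDerivAt (fun x : ℝ × ℝ => x.2 - p.2) (ContinuousLinearMap.snd ℝ ℝ ℝ) (X n) :=
      (hasFDerivAt_snd (𝕜 := ℝ) (p := X n) (E := ℝ) (F := ℝ)).sub_const p.2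
    have hq1 : HasFDerivAt (fun x : ℝ × ℝ => (x.1 - p.1)^2)
        ((2 * ((X n).1 - p.1)) • (ContinuousLinearMap.fst ℝ ℝ ℝ)) (X n) := by
      have h2 := hfst.mul hfst
      have heq : (fun x : ℝ × ℝ => (x.1 - p.1) * (x.1 - p.1)) = fun x => (x.1 - p.1)^2 := by
        funext x; ring
      change HasFDerivAt (fun x : ℝ × ℝ => (x.1 - p.1) * (x.1 - p.1)) _ (X n) at h2
      rw [heq] at h2
      refine h2.congr_fderiv ?_
      apply ContinuousLinearMap.ext; intro v
      simp [ContinuousLinearMap.smul_apply, ContinuousLinearMap.add_apply]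
      ring
    have hq2 : HasFDerivAt (fun x : ℝ × ℝ => (x.2 - p.2)^2)
        ((2 * ((X n).2 - p.2)) • (ContinuousLinearMap.snd ℝ ℝ ℝ)) (X n) := by
      have h2 := hsnd.mul hsnd
      have heq : (fun x : ℝ × ℝ => (x.2 - p.2) * (x.2 - p.2)) = fun x => (x.2 - p.2)^2 := by
        funext x; ring
      change HasFDerivAt (fun x : ℝ × ℝ => (x.2 - p.2) * (x.2 - p.2)) _ (X n) at h2
      rw [heq] at h2
      refine h2.congr_fderiv ?_
      apply ContinuousLinearMap.ext; intro v
      simp [ContinuousLinearMap.smul_apply, ContinuousLinearMap.add_apply]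
      ring
    have hqd : HasFDerivAt q
        (((2 * ((X n).1 - p.1)) • (ContinuousLinearMap.fst ℝ ℝ ℝ)) +
         ((2 * ((X n).2 - p.2)) • (ContinuousLinearMap.snd ℝ ℝ ℝ))) (X n) := hq1.add hq2
    have hφd : HasFDerivAt φ
        (D + (n:ℝ) • (((2 * ((X n).1 - p.1)) • (ContinuousLinearMap.fst ℝ ℝ ℝ)) +
         ((2 * ((X n).2 - p.2)) • (ContinuousLinearMap.snd ℝ ℝ ℝ)))) (X n) := by
      have h1 := ((D.hasFDerivAt (x := X n)).add (hqd.const_mul (n:ℝ))).const_add (u (X n) - D (X n) - n * q (X n))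
      exact h1
    have hfd : fderiv ℝ φ (X n) = D + (n:ℝ) • (((2 * ((X n).1 - p.1)) • (ContinuousLinearMap.fst ℝ ℝ ℝ)) +
         ((2 * ((X n).2 - p.2)) • (ContinuousLinearMap.snd ℝ ℝ ℝ))) := hφd.fderiv
    have hvn := hvisc.1 (X n) (mem_univ _) φ (Metric.ball p 1) Metric.isOpen_ball hball
      (subset_univ _) hφcd hφeq hφge
    rw [hfd] at hvn
    have he1 : (D + (n:ℝ) • (((2 * ((X n).1 - p.1)) • (ContinuousLinearMap.fst ℝ ℝ ℝ)) +
         ((2 * ((X n).2 - p.2)) • (ContinuousLinearMap.snd ℝ ℝ ℝ)))) ((1:ℝ), (0:ℝ)) = A n := by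
      simp [hA, ha, ContinuousLinearMap.add_apply, ContinuousLinearMap.smul_apply]
      ring
    have he2 : (D + (n:ℝ) • (((2 * ((X n).1 - p.1)) • (ContinuousLinearMap.fst ℝ ℝ ℝ)) +
         ((2 * ((X n).2 - p.2)) • (ContinuousLinearMap.snd ℝ ℝ ℝ)))) ((0:ℝ), (1:ℝ)) = B n := by
      simp [hB, hb, ContinuousLinearMap.add_apply, ContinuousLinearMap.smul_apply]
      ring
    rwa [he1, he2] at hvn
  have hlim : Tendsto (fun n => (A n)^2 - (B n)^2) atTop (𝓝 (a^2 - b^2)) :=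
    ((htendA.pow 2).sub (htendB.pow 2))
  exact ge_of_tendsto hlim hev

lemma ae_diff (u : ℝ × ℝ → ℝ) (hLip : LocallyLipschitz u) :
    ∀ᵐ x : ℝ × ℝ, DifferentiableAt ℝ u x := by
  rw [ae_iff]
  apply measure_null_of_locally_null
  intro x hx
  obtain ⟨K, t, ht, hlip⟩ := hLip x
  obtain ⟨r, hr, hball⟩ := Metric.mem_nhds_iff.1 ht
  have hlip' : LipschitzOnWith K u (Metric.ball x r) := hlip.mono hball
  have hae := hlip'.ae_differentiableWithinAt_of_mem (μ := volume)
  refine ⟨Metric.ball x r ∩ {y | ¬ DifferentiableAt ℝ u y}, ?_, ?_⟩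
  · exact Filter.inter_mem (mem_nhdsWithin_of_mem_nhds (Metric.ball_mem_nhds x hr))
      self_mem_nhdsWithin
  · have : ∀ᵐ y : ℝ × ℝ, y ∈ Metric.ball x r → DifferentiableAt ℝ u y := by
      filter_upwards [hae] with y hy hyb
      exact (hy hyb).differentiableAt (Metric.isOpen_ball.mem_nhds hyb)
    rw [ae_iff] at this
    apply measure_mono_null _ this
    intro y hy
    simp only [mem_setOf_eq, not_forall, mem_inter_iff] at *
    exact ⟨hy.1, hy.2⟩

lemma oneD (g : ℝ → ℝ) (hg : Continuous g) {T c K δ : ℝ} (hT : 0 < T) (hδ : 0 < δ)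
    (hquot : ∀ t ∈ Icc (0:ℝ) T, ∀ h ∈ Ioc (0:ℝ) δ, |g (t + h) - g t| ≤ K * h)
    (hderiv : ∀ᵐ t : ℝ, t ∈ Ioo (0:ℝ) T → ∃ d, HasDerivAt g d t ∧ c ≤ d) :
    c * T ≤ g T - g 0 := by
  set hn : ℕ → ℝ := fun n => δ / (n + 1) with hhn
  have hhn_pos : ∀ n : ℕ, 0 < hn n := fun n => by positivity
  have hhn_le : ∀ n : ℕ, hn n ≤ δ := by
    intro n
    rw [hhn]
    rw [div_le_iff₀ (by positivity)]
    nlinarith [(by positivity : (0:ℝ) ≤ (n:ℝ))]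
  have hhn_tend : Tendsto hn atTop (𝓝 0) := by
    have h1 : Tendsto (fun n : ℕ => ((n:ℝ) + 1)) atTop atTop := by
      apply tendsto_atTop_add_const_right
      exact tendsto_natCast_atTop_atTop
    have h2 := h1.inv_tendsto_atTop.const_mul δ
    simp only [mul_zero] at h2
    apply h2.congr
    intro n
    simp [hhn, div_eq_mul_inv]
  set φ : ℕ → ℝ → ℝ := fun n t => (g (t + hn n) - g t) / hn n with hφ
  have hgi : ∀ a b : ℝ, IntervalIntegrable g volume a b := fun a b =>
    hg.intervalIntegrable a b
  -- Step 1 : the integral identity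
  have hIn : ∀ n : ℕ, ∫ t in (0:ℝ)..T, φ n t =
      (∫ t in T..(T + hn n), g t) / hn n - (∫ t in (0:ℝ)..(hn n), g t) / hn n := by
    intro n
    have h1 : ∫ t in (0:ℝ)..T, φ n t = (∫ t in (0:ℝ)..T, (g (t + hn n) - g t)) / hn n := by
      rw [← intervalIntegral.integral_div]
    have h2 : ∫ t in (0:ℝ)..T, (g (t + hn n) - g t)
        = (∫ t in (0:ℝ)..T, g (t + hn n)) - ∫ t in (0:ℝ)..T, g t := by
      apply intervalIntegral.integral_sub
      · have := (hgi (0 + hn n) (T + hn n)).comp_add_right (hn n)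
        simpa using this
      · exact hgi 0 T
    have h3 : (∫ t in (0:ℝ)..T, g (t + hn n)) = ∫ t in (hn n)..(T + hn n), g t := by
      have := intervalIntegral.integral_comp_add_right (a := (0:ℝ)) (b := T) (f := g) (hn n)
      simpa using this
    have h4 : (∫ t in (hn n)..(T + hn n), g t) - ∫ t in (0:ℝ)..T, g t
        = (∫ t in T..(T + hn n), g t) - ∫ t in (0:ℝ)..(hn n), g t := by
      have e1 : (∫ t in (0:ℝ)..(hn n), g t) + ∫ t in (hn n)..(T + hn n), g t
          = ∫ t in (0:ℝ)..(T + hn n), g t :=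
        intervalIntegral.integral_add_adjacent_intervals (hgi _ _) (hgi _ _)
      have e2 : (∫ t in (0:ℝ)..T, g t) + ∫ t in T..(T + hn n), g t
          = ∫ t in (0:ℝ)..(T + hn n), g t :=
        intervalIntegral.integral_add_adjacent_intervals (hgi _ _) (hgi _ _)
      linarith
    rw [h1, h2, h3, h4, sub_div]
  -- Step 2 : endpoint limits
  have hend : ∀ x : ℝ, Tendsto (fun n => (∫ t in x..(x + hn n), g t) / hn n) atTop (𝓝 (g x)) := by
    intro x
    have hF : HasDerivAt (fun y => ∫ t in x..y, g t) (g x) x :=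
      intervalIntegral.integral_hasDerivAt_right (hgi x x)
        (hg.stronglyMeasurableAtFilter _ _) hg.continuousAt
    have hslope := hasDerivAt_iff_tendsto_slope.1 hF
    have hseq : Tendsto (fun n => x + hn n) atTop (𝓝[≠] x) := by
      apply tendsto_nhdsWithin_of_tendsto_nhds_of_eventually_within
      · simpa using (tendsto_const_nhds (x := x)).add hhn_tend
      · exact Eventually.of_forall fun n => by
          simp only [mem_compl_iff, mem_singleton_iff]
          have := hhn_pos n; intro h; nlinarith [congrArg (· - x) h]
    have := hslope.comp hseq
    have heq : ∀ n : ℕ, slope (fun y => ∫ t in x..y, g t) x (x + hn n)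
        = (∫ t in x..(x + hn n), g t) / hn n := by
      intro n
      rw [slope_def_field]
      simp only [intervalIntegral.integral_same]
      simp [add_sub_cancel_left]
    exact (hslope.comp hseq).congr fun n => heq n
  -- Step 3 : dominated convergence
  have hK0 : 0 ≤ K := by
    have := hquot 0 (by constructor <;> [rfl; exact hT.le]) δ ⟨hδ, le_refl δ⟩
    nlinarith [abs_nonneg (g (0 + δ) - g 0)]
  set μ : Measure ℝ := volume.restrict (Ioc 0 T) with hμ
  have hμfin : μ (Set.univ) < ⊤ := by
    rw [hμ, Measure.restrict_apply_univ, Real.volume_Ioc]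
    exact ENNReal.ofReal_lt_top
  have hφmeas : ∀ n : ℕ, AEStronglyMeasurable (φ n) μ := by
    intro n
    exact (((hg.comp (continuous_id.add continuous_const)).sub hg).div_const _).aestronglyMeasurable
  have hφbound : ∀ n : ℕ, ∀ᵐ t ∂μ, ‖φ n t‖ ≤ K := by
    intro n
    rw [hμ, ae_restrict_iff' measurableSet_Ioc]
    refine Eventually.of_forall fun t ht => ?_
    have h1 := hquot t ⟨ht.1.le, ht.2⟩ (hn n) ⟨hhn_pos n, hhn_le n⟩
    rw [Real.norm_eq_abs, hφ]
    rw [abs_div, abs_of_pos (hhn_pos n), div_le_iff₀ (hhn_pos n)]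
    exact h1
  have hlimae : ∀ᵐ t ∂μ, Tendsto (fun n => φ n t) atTop (𝓝 (deriv g t)) := by
    rw [hμ, ae_restrict_iff' measurableSet_Ioc]
    have h2 : ∀ᵐ t : ℝ, t ∈ Ioc (0:ℝ) T → (t ∈ Ioo (0:ℝ) T →
        Tendsto (fun n => φ n t) atTop (𝓝 (deriv g t))) := by
      filter_upwards [hderiv] with t ht hIoc hIoo
      obtain ⟨d, hd, _⟩ := ht hIoo
      rw [hd.deriv]
      have hslope := hasDerivAt_iff_tendsto_slope.1 hd
      have hseq : Tendsto (fun n => t + hn n) atTop (𝓝[≠] t) := by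
        apply tendsto_nhdsWithin_of_tendsto_nhds_of_eventually_within
        · simpa using (tendsto_const_nhds (x := t)).add hhn_tend
        · exact Eventually.of_forall fun n => by
            simp only [mem_compl_iff, mem_singleton_iff]
            have := hhn_pos n; intro h; nlinarith [congrArg (· - t) h]
      have heq : ∀ n : ℕ, slope g t (t + hn n) = φ n t := by
        intro n
        rw [slope_def_field]
        simp [add_sub_cancel_left]
        rfl
      exact (hslope.comp hseq).congr fun n => heq n
    -- upgrade: Ioc = Ioo up to null set {T}
    have h3 : ∀ᵐ t : ℝ, t ≠ T := by
      rw [ae_iff]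
      simp only [not_not]
      have : {t : ℝ | t = T} ⊆ {T} := fun t ht => ht
      exact measure_mono_null this (measure_singleton T)
    filter_upwards [h2, h3] with t ht htT hIoc
    exact ht hIoc ⟨hIoc.1, lt_of_le_of_ne hIoc.2 htT⟩
  have hbound_int : Integrable (fun _ : ℝ => K) μ := by
    apply integrable_const
  have hDCT := tendsto_integral_of_dominated_convergence (μ := μ) (F := φ)
    (f := deriv g) (fun _ => K) hφmeas hbound_int hφbound hlimae
  -- Step 4 : lower bound for the limit integral
  have hDbound : ∀ᵐ t ∂μ, c ≤ deriv g t ∧ |deriv g t| ≤ K := by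
    rw [hμ, ae_restrict_iff' measurableSet_Ioc]
    have h3 : ∀ᵐ t : ℝ, t ≠ T := by
      rw [ae_iff]
      simp only [not_not]
      exact measure_mono_null (fun t ht => ht) (measure_singleton T)
    filter_upwards [hderiv, h3] with t ht htT hIoc
    have hIoo : t ∈ Ioo (0:ℝ) T := ⟨hIoc.1, lt_of_le_of_ne hIoc.2 htT⟩
    obtain ⟨d, hd, hcd⟩ := ht hIoo
    rw [hd.deriv]
    refine ⟨hcd, ?_⟩
    -- |d| ≤ K as limit of bounded quotients
    have hslope := hasDerivAt_iff_tendsto_slope.1 hd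
    have hseq : Tendsto (fun n => t + hn n) atTop (𝓝[≠] t) := by
      apply tendsto_nhdsWithin_of_tendsto_nhds_of_eventually_within
      · simpa using (tendsto_const_nhds (x := t)).add hhn_tend
      · exact Eventually.of_forall fun n => by
          simp only [mem_compl_iff, mem_singleton_iff]
          have := hhn_pos n; intro h; nlinarith [congrArg (· - t) h]
    have hlim : Tendsto (fun n => φ n t) atTop (𝓝 d) := by
      refine (hslope.comp hseq).congr fun n => ?_
      show slope g t (t + hn n) = φ n t
      rw [slope_def_field]
      simp [add_sub_cancel_left]
      rfl
    have : Tendsto (fun n => |φ n t|) atTop (𝓝 |d|) := hlim.abs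
    apply le_of_tendsto this
    refine Eventually.of_forall fun n => ?_
    have h1 := hquot t ⟨hIoo.1.le, hIoo.2.le⟩ (hn n) ⟨hhn_pos n, hhn_le n⟩
    rw [hφ]
    rw [abs_div, abs_of_pos (hhn_pos n), div_le_iff₀ (hhn_pos n)]
    exact h1
  have hDmeas : AEStronglyMeasurable (deriv g) μ :=
    (measurable_deriv g).aestronglyMeasurable
  have hDint : Integrable (deriv g) μ := by
    apply Integrable.mono' hbound_int hDmeas
    filter_upwards [hDbound] with t ht
    rw [Real.norm_eq_abs]; exact ht.2
  have hlower : c * T ≤ ∫ t, deriv g t ∂μ := by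
    have h1 : ∫ _t, c ∂μ ≤ ∫ t, deriv g t ∂μ := by
      apply integral_mono_ae (integrable_const c) hDint
      filter_upwards [hDbound] with t ht using ht.1
    have h2 : ∫ _t, c ∂μ = c * T := by
      rw [integral_const]
      simp [hμ, Real.volume_Ioc, ENNReal.toReal_ofReal hT.le, smul_eq_mul, mul_comm]
      rw [max_eq_left hT.le]; ring
    linarith
  -- Step 5 : combine
  have hInt2 : ∀ n : ℕ, ∫ t, φ n t ∂μ = ∫ t in (0:ℝ)..T, φ n t := by
    intro n
    rw [intervalIntegral.integral_of_le hT.le, hμ]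
  have hlim1 : Tendsto (fun n => ∫ t, φ n t ∂μ) atTop (𝓝 (g T - g 0)) := by
    have h0' : Tendsto (fun n => (∫ t in (0:ℝ)..(hn n), g t) / hn n) atTop (𝓝 (g 0)) := by
      refine (hend 0).congr fun n => ?_
      norm_num
    have h5 := (hend T).sub h0'
    refine h5.congr fun n => ?_
    rw [hInt2 n, hIn n]
  have := tendsto_nhds_unique hlim1 hDCT
  linarith [hlower, this.le, this.ge]

lemma seg (u : ℝ × ℝ → ℝ) (hu : Continuous u)
    (hN : ∀ᵐ x : ℝ × ℝ, DifferentiableAt ℝ u x)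
    {s c K δ T : ℝ} (hδ : 0 < δ) (hT : 0 < T) (q : ℝ × ℝ)
    (hquot : ∀ t ∈ Icc (0:ℝ) T, ∀ τ ∈ Icc (-δ) δ, ∀ h ∈ Ioc (0:ℝ) δ,
      |u (q.1 + (t + h), q.2 + s * (t + h) + τ) - u (q.1 + t, q.2 + s * t + τ)| ≤ K * h)
    (hdir : ∀ t ∈ Ioo (0:ℝ) T, ∀ τ ∈ Icc (-δ) δ,
      DifferentiableAt ℝ u (q.1 + t, q.2 + s * t + τ) →
      c ≤ fderiv ℝ u (q.1 + t, q.2 + s * t + τ) (1, s)) :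
    c * T ≤ u (q.1 + T, q.2 + s * T) - u (q.1, q.2) := by
  classical
  -- the non-differentiability set is null
  set N : Set (ℝ × ℝ) := {x | ¬ DifferentiableAt ℝ u x} with hNdef
  have hNmeas : MeasurableSet N := (measurableSet_of_differentiableAt ℝ u).compl
  have hNnull : volume N = 0 := by rw [← ae_iff] at *; exact hN
  -- the measure-preserving parametrization (τ, t) ↦ (q.1 + t, q.2 + s t + τ)
  set Ψ : ℝ × ℝ → ℝ × ℝ := fun z => (q.1 + z.2, q.2 + s * z.2 + z.1) with hΨdef
  have hΨ : MeasurePreserving Ψ (volume.prod volume) (volume.prod volume) := by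
    have hΦ : MeasurePreserving (fun z : ℝ × ℝ => (q.1 + z.1, q.2 + s * z.1 + z.2))
        (volume.prod volume) (volume.prod volume) := by
      apply MeasurePreserving.skew_product (g := fun t τ => q.2 + s * t + τ)
        (measurePreserving_add_left volume q.1)
      · fun_prop
      · exact Eventually.of_forall fun t =>
          (measurePreserving_add_left volume (q.2 + s * t)).map_eq
    have hswap : MeasurePreserving (Prod.swap : ℝ × ℝ → ℝ × ℝ)
        (volume.prod volume) (volume.prod volume) := Measure.measurePreserving_swap
    exact hΦ.comp hswap
  have hprodnull : (volume.prod volume) (Ψ ⁻¹' N) = 0 := by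
    rw [hΨ.measure_preimage hNmeas.nullMeasurableSet]
    rw [← Measure.volume_eq_prod]
    exact hNnull
  have hslices := Measure.measure_ae_null_of_prod_null hprodnull
  -- the set of good shifts τ
  have hGae : ∀ᵐ τ : ℝ, volume {t : ℝ | Ψ (τ, t) ∈ N} = 0 := by
    filter_upwards [hslices] with τ hτ
    exact hτ
  -- good τ arbitrarily close to 0
  have hgood : ∀ ε > (0:ℝ), ∃ τ, 0 < τ ∧ τ < ε ∧ volume {t : ℝ | Ψ (τ, t) ∈ N} = 0 := by
    intro ε hε
    rw [ae_iff] at hGae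
    by_contra hcon
    push_neg at hcon
    have hsub : Ioo (0:ℝ) ε ⊆ {τ | ¬ volume {t : ℝ | Ψ (τ, t) ∈ N} = 0} := by
      intro τ hτ
      exact hcon τ hτ.1 hτ.2
    have := measure_mono_null hsub hGae
    rw [Real.volume_Ioo] at this
    simp only [ENNReal.ofReal_eq_zero, sub_zero] at this
    linarith
  -- for every good small τ we get the 1-D estimate
  have hest : ∀ τ, 0 < τ → τ < δ → volume {t : ℝ | Ψ (τ, t) ∈ N} = 0 →
      c * T ≤ u (q.1 + T, q.2 + s * T + τ) - u (q.1, q.2 + τ) := by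
    intro τ hτ0 hτδ hτnull
    set g : ℝ → ℝ := fun t => u (q.1 + t, q.2 + s * t + τ) with hgdef
    have hτmem : τ ∈ Icc (-δ) δ := ⟨by linarith, hτδ.le⟩
    have hgc : Continuous g := by
      apply hu.comp
      fun_prop
    have h1 : c * T ≤ g T - g 0 := by
      apply oneD g hgc hT hδ
      · intro t ht h hh
        exact hquot t ht τ hτmem h hh
      · have : ∀ᵐ t : ℝ, ¬ Ψ (τ, t) ∈ N := by
          rw [ae_iff]
          simpa using hτnull
        filter_upwards [this] with t hdiff htIoo
        simp only [hNdef, mem_setOf_eq, not_not] at hdiff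
        refine ⟨fderiv ℝ u (Ψ (τ, t)) (1, s), ?_, ?_⟩
        · have hinner : HasDerivAt (fun t : ℝ => (q.1 + t, q.2 + s * t + τ)) ((1:ℝ), s) t := by
            apply HasDerivAt.prodMk
            · simpa using (hasDerivAt_id t).const_add q.1
            · have h2 : HasDerivAt (fun t : ℝ => q.2 + s * t + τ) s t := by
                have := (((hasDerivAt_id t).const_mul s).const_add q.2).add_const τ
                simpa using this
              exact h2
          have := hdiff.hasFDerivAt.comp_hasDerivAt t hinner
          exact this
        · exact hdir t htIoo τ hτmem hdiff
    have h2 : g T = u (q.1 + T, q.2 + s * T + τ) := rfl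
    have h3 : g 0 = u (q.1, q.2 + τ) := by simp [hgdef]
    rw [h2, h3] at h1
    exact h1
  -- pass to the limit τ → 0⁺
  have hτk : ∀ k : ℕ, ∃ τ, 0 < τ ∧ τ < min δ (1 / (k + 1)) ∧
      c * T ≤ u (q.1 + T, q.2 + s * T + τ) - u (q.1, q.2 + τ) := by
    intro k
    obtain ⟨τ, hτ0, hτε, hτnull⟩ := hgood (min δ (1 / (k + 1))) (by positivity)
    exact ⟨τ, hτ0, hτε, hest τ hτ0 (lt_of_lt_of_le hτε (min_le_left _ _)) hτnull⟩
  choose τk hτk0 hτklt hτkest using hτk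
  have hτk_tend : Tendsto τk atTop (𝓝 0) := by
    apply squeeze_zero (fun k => (hτk0 k).le)
    · intro k
      exact (hτklt k).le.trans (min_le_right _ _)
    · have h1 : Tendsto (fun k : ℕ => ((k:ℝ) + 1)) atTop atTop :=
        tendsto_atTop_add_const_right _ _ tendsto_natCast_atTop_atTop
      have h2 := h1.inv_tendsto_atTop
      refine h2.congr fun k => ?_
      simp [one_div]
  have hF : Tendsto (fun k => u (q.1 + T, q.2 + s * T + τk k) - u (q.1, q.2 + τk k))
      atTop (𝓝 (u (q.1 + T, q.2 + s * T) - u (q.1, q.2))) := by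
    have hc1 : Continuous fun τ : ℝ => u (q.1 + T, q.2 + s * T + τ) := by fun_prop
    have hc2 : Continuous fun τ : ℝ => u (q.1, q.2 + τ) := by fun_prop
    have := ((hc1.tendsto 0).comp hτk_tend).sub ((hc2.tendsto 0).comp hτk_tend)
    simpa using this
  exact ge_of_tendsto hF (Eventually.of_forall fun k => hτkest k)

lemma localstep (u : ℝ × ℝ → ℝ) (hLip : LocallyLipschitz u)
    (hvisc : IsViscositySolution u Set.univ)
    (hpos : ∀ p : ℝ × ℝ, DifferentiableAt ℝ u p → 0 < fderiv ℝ u p (1, 0))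
    {s : ℝ} (hs : |s| ≤ 1) (p : ℝ × ℝ) (t₀ : ℝ) :
    ∃ ρ > (0:ℝ), ∃ c > (0:ℝ), ∀ t₁ t₂ : ℝ, t₀ - ρ ≤ t₁ → t₁ ≤ t₂ → t₂ ≤ t₀ + ρ →
      c * (t₂ - t₁) ≤ u (p.1 + t₂, p.2 + s * t₂) - u (p.1 + t₁, p.2 + s * t₁) := by
  have hu : Continuous u := hLip.continuous
  set x₀ : ℝ × ℝ := (p.1 + t₀, p.2 + s * t₀) with hx₀def
  obtain ⟨K, tset, htset, hlip⟩ := hLip x₀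
  obtain ⟨r, hr, hball⟩ := Metric.mem_nhds_iff.1 htset
  have hlipball : LipschitzOnWith K u (Metric.ball x₀ r) := hlip.mono hball
  set Kr : ℝ := max (K:ℝ) 1 with hKrdef
  have hKr1 : (1:ℝ) ≤ Kr := le_max_right _ _
  have hKr0 : (0:ℝ) < Kr := lt_of_lt_of_le one_pos hKr1
  set c : ℝ := 1 / (2 * Kr) with hcdef
  have hc0 : 0 < c := by positivity
  -- directional derivative bound on the half ball
  have hdirball : ∀ x ∈ Metric.ball x₀ (r/2), DifferentiableAt ℝ u x →
      c ≤ fderiv ℝ u x (1, s) := by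
    intro x hx hdx
    have hnb : Metric.ball x₀ r ∈ 𝓝 x :=
      Metric.isOpen_ball.mem_nhds (Metric.ball_subset_ball (by linarith) hx)
    have hDnorm : ‖fderiv ℝ u x‖ ≤ (K:ℝ) := norm_fderiv_le_of_lipschitzOn ℝ hnb hlipball
    set a : ℝ := fderiv ℝ u x (1, 0) with hadef
    set b : ℝ := fderiv ℝ u x (0, 1) with hbdef
    have ha0 : 0 < a := hpos x hdx
    have hab : 1 ≤ a^2 - b^2 := visc_at_diff u hu hvisc hdx
    have hnorm1 : ‖((1:ℝ), (0:ℝ))‖ = 1 := by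
      rw [Prod.norm_def]; simp
    have hnorm2 : ‖((0:ℝ), (1:ℝ))‖ = 1 := by
      rw [Prod.norm_def]; simp
    have haK : |a| ≤ Kr := by
      have h1 : ‖fderiv ℝ u x ((1:ℝ),(0:ℝ))‖ ≤ ‖fderiv ℝ u x‖ * ‖((1:ℝ),(0:ℝ))‖ :=
        (fderiv ℝ u x).le_opNorm _
      rw [hnorm1, mul_one] at h1
      rw [← Real.norm_eq_abs]
      exact h1.trans (hDnorm.trans (le_max_left _ _))
    have hbK : |b| ≤ Kr := by
      have h1 : ‖fderiv ℝ u x ((0:ℝ),(1:ℝ))‖ ≤ ‖fderiv ℝ u x‖ * ‖((0:ℝ),(1:ℝ))‖ :=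
        (fderiv ℝ u x).le_opNorm _
      rw [hnorm2, mul_one] at h1
      rw [← Real.norm_eq_abs]
      exact h1.trans (hDnorm.trans (le_max_left _ _))
    have hsplit : fderiv ℝ u x (1, s) = a + s * b := by
      have h1 : ((1:ℝ), s) = ((1:ℝ), (0:ℝ)) + s • ((0:ℝ), (1:ℝ)) := by
        simp [Prod.ext_iff]
      rw [h1, map_add, _root_.map_smul, smul_eq_mul, hadef, hbdef]
    rw [hsplit]
    have hsb : -|b| ≤ s * b := by
      have h1 : |s * b| ≤ |b| := by
        rw [abs_mul]
        nlinarith [abs_nonneg b, abs_nonneg s]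
      linarith [neg_abs_le (s * b)]
    have hgoal : c ≤ a - |b| := by
      have hba : |b| < a := by nlinarith [abs_nonneg b, sq_abs b]
      rw [hcdef, div_le_iff₀ (by positivity)]
      have h6 : a + |b| ≤ 2 * Kr := by linarith [le_abs_self a]
      have h7 : 0 ≤ a - |b| := by linarith
      have h8 : (a - |b|) * (a + |b|) = a^2 - |b|^2 := by ring
      rw [sq_abs] at h8
      have h9 : (a - |b|) * (a + |b|) ≤ (a - |b|) * (2 * Kr) := by
        exact mul_le_mul_of_nonneg_left h6 h7
      linarith
    linarith
  -- main estimate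
  refine ⟨r/8, by linarith, c, hc0, ?_⟩
  intro t₁ t₂ h1 h2 h3
  rcases eq_or_lt_of_le h2 with rfl | hlt
  · simp
  set T : ℝ := t₂ - t₁ with hTdef
  have hT : 0 < T := by simp [hTdef]; linarith
  set δ : ℝ := r/8 with hδdef
  have hδ : 0 < δ := by simp [hδdef]; linarith
  set q : ℝ × ℝ := (p.1 + t₁, p.2 + s * t₁) with hqdef
  -- geometric containment
  have hgeo : ∀ t' τ : ℝ, 0 ≤ t' → t' ≤ T + δ → |τ| ≤ δ →
      (q.1 + t', q.2 + s * t' + τ) ∈ Metric.ball x₀ (r/2) := by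
    intro t' τ ht'0 ht'T hτ
    rw [Metric.mem_ball, Prod.dist_eq]
    have he1 : q.1 + t' - x₀.1 = t₁ + t' - t₀ := by
      simp [hqdef, hx₀def]; ring
    have he2 : q.2 + s * t' + τ - x₀.2 = s * (t₁ + t' - t₀) + τ := by
      simp [hqdef, hx₀def]; ring
    have hd1 : |t₁ + t' - t₀| ≤ r/4 := by
      rw [abs_le]
      constructor <;> [skip; skip] <;> simp only [hδdef, hTdef] at ht'T ⊢ <;> linarith
    have hd2 : |s * (t₁ + t' - t₀) + τ| ≤ 3 * r / 8 := by
      have := abs_add_le (s * (t₁ + t' - t₀)) τ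
      have h5 : |s * (t₁ + t' - t₀)| ≤ r/4 := by
        rw [abs_mul]
        nlinarith [abs_nonneg (t₁ + t' - t₀), abs_nonneg s]
      simp only [hδdef] at hτ
      linarith
    rw [Real.dist_eq, Real.dist_eq, he1, he2]
    apply max_lt <;> [linarith; linarith]
  have hseg := seg u hu (ae_diff u hLip) (s := s) (c := c) (K := Kr) hδ hT q ?_ ?_
  · have he1 : (q.1 + T, q.2 + s * T) = (p.1 + t₂, p.2 + s * t₂) := by
      rw [Prod.ext_iff]
      constructor <;> simp [hqdef, hTdef] <;> ring
    have he2 : (q.1, q.2) = (p.1 + t₁, p.2 + s * t₁) := by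
      simp [hqdef]
    rw [he1, he2] at hseg
    exact hseg
  · -- hquot
    intro t ht τ hτ h hh
    have hx : (q.1 + (t + h), q.2 + s * (t + h) + τ) ∈ Metric.ball x₀ (r/2) := by
      apply hgeo <;> [linarith [ht.1, hh.1.le]; linarith [ht.2, hh.2]; rwa [abs_le]]
    have hy : (q.1 + t, q.2 + s * t + τ) ∈ Metric.ball x₀ (r/2) := by
      apply hgeo <;> [exact ht.1; linarith [ht.2]; rwa [abs_le]]
    have hsub : Metric.ball x₀ (r/2) ⊆ Metric.ball x₀ r := Metric.ball_subset_ball (by linarith)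
    have hdd := hlipball.dist_le_mul _ (hsub hx) _ (hsub hy)
    have hdist : dist ((q.1 + (t + h), q.2 + s * (t + h) + τ) : ℝ × ℝ)
        (q.1 + t, q.2 + s * t + τ) = h := by
      rw [Prod.dist_eq, Real.dist_eq, Real.dist_eq]
      have e1 : q.1 + (t + h) - (q.1 + t) = h := by ring
      have e2 : q.2 + s * (t + h) + τ - (q.2 + s * t + τ) = s * h := by ring
      rw [e1, e2]
      rw [abs_of_pos hh.1]
      apply max_eq_left
      rw [abs_mul, abs_of_pos hh.1]
      nlinarith [abs_nonneg s, hh.1]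
    rw [hdist] at hdd
    rw [← Real.dist_eq]
    calc dist (u (q.1 + (t + h), q.2 + s * (t + h) + τ)) (u (q.1 + t, q.2 + s * t + τ))
        ≤ (K:ℝ) * h := hdd
      _ ≤ Kr * h := by
          apply mul_le_mul_of_nonneg_right (le_max_left _ _) hh.1.le
  · -- hdir
    intro t ht τ hτ hdx
    apply hdirball
    · apply hgeo <;> [exact ht.1.le; linarith [ht.2.le]; rwa [abs_le]]
    · exact hdx

/-- A locally Lipschitz viscosity solution `u` of the Lorentzian eikonal equation on
2-dimensional Minkowski space-time has past-directed time orientation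
(`∂u/∂x(p) > 0` at every differentiability point `p`) if and only if `u` is strictly
increasing along every nonconstant future-directed causal C¹ curve: for every C¹
curve `γ : [a, b] → ℝ²` with `a < b`, `γ₁' > 0` and `|γ₂'| ≤ γ₁'` on `[a,b]`,
one has `u(γ(b)) > u(γ(a))`. -/
theorem past_directed_iff_increasing_along_causal
    (u : ℝ × ℝ → ℝ) (hLip : LocallyLipschitz u)
    (hvisc : IsViscositySolution u Set.univ) :
    (∀ p : ℝ × ℝ, DifferentiableAt ℝ u p → 0 < fderiv ℝ u p (1, 0)) ↔
    (∀ (a b : ℝ), a < b → ∀ γ γ' : ℝ → ℝ × ℝ,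
      ContinuousOn γ' (Set.Icc a b) →
      (∀ t ∈ Set.Icc a b, HasDerivWithinAt γ (γ' t) (Set.Icc a b) t) →
      (∀ t ∈ Set.Icc a b, 0 < (γ' t).1 ∧ |(γ' t).2| ≤ (γ' t).1) →
      u (γ a) < u (γ b)) := by
  have hu : Continuous u := hLip.continuous
  constructor
  · -- forward direction
    intro hpos a b hab γ γ' hγ'c hγd hγcau
    -- strict monotonicity along causal lines
    have hstrict : ∀ s : ℝ, |s| ≤ 1 → ∀ p : ℝ × ℝ, ∀ t₁ t₂ : ℝ, t₁ < t₂ →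
        u (p.1 + t₁, p.2 + s * t₁) < u (p.1 + t₂, p.2 + s * t₂) := by
      intro s hs p t₁ t₂ hlt
      set f : ℝ → ℝ := fun t => u (p.1 + t, p.2 + s * t) with hf
      have hloc : ∀ t₀ : ℝ, ∃ ρ > (0:ℝ), ∃ c > (0:ℝ), ∀ r₁ r₂ : ℝ,
          t₀ - ρ ≤ r₁ → r₁ ≤ r₂ → r₂ ≤ t₀ + ρ → c * (r₂ - r₁) ≤ f r₂ - f r₁ :=
        fun t₀ => localstep u hLip hvisc hpos hs p t₀
      -- nondecreasing
      have hmono : ∀ a' b' : ℝ, a' ≤ b' → f a' ≤ f b' := by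
        intro a' b' hab'
        set S := {t : ℝ | t ∈ Icc a' b' ∧ ∀ x ∈ Icc a' t, f a' ≤ f x} with hS
        have ha'S : a' ∈ S := by
          refine ⟨⟨le_refl _, hab'⟩, fun x hx => ?_⟩
          have : x = a' := le_antisymm hx.2 hx.1
          rw [this]
        have hbdd : BddAbove S := ⟨b', fun t ht => ht.1.2⟩
        set m := sSup S with hm
        have hmS : a' ≤ m := le_csSup hbdd ha'S
        have hmb : m ≤ b' := csSup_le ⟨a', ha'S⟩ (fun t ht => ht.1.2)
        obtain ⟨ρ, hρ, c, hc, hloc'⟩ := hloc m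
        obtain ⟨t, htS, htm⟩ : ∃ t ∈ S, m - ρ < t :=
          exists_lt_of_lt_csSup ⟨a', ha'S⟩ (by linarith)
        have hP : ∀ x ∈ Icc a' (min b' (m + ρ)), f a' ≤ f x := by
          intro x hx
          rcases le_or_gt x t with h | h
          · exact htS.2 x ⟨hx.1, h⟩
          · have hxm : x ≤ m + ρ := le_trans hx.2 (min_le_right _ _)
            have h1 := hloc' t x htm.le h.le hxm
            have h2 : f a' ≤ f t := htS.2 t ⟨htS.1.1, le_refl t⟩
            have h3 : 0 ≤ c * (x - t) := mul_nonneg hc.le (by linarith)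
            linarith
        have hminS : min b' (m + ρ) ∈ S := by
          refine ⟨⟨le_min hab' (by linarith), min_le_left _ _⟩, hP⟩
        have hle : min b' (m + ρ) ≤ m := le_csSup hbdd hminS
        have hbm : b' ≤ m := by
          rcases le_or_gt b' (m + ρ) with h | h
          · rw [min_eq_left h] at hle; exact hle
          · exfalso; rw [min_eq_right h.le] at hle; linarith
        have hmb' : m = b' := le_antisymm hmb hbm
        apply hP b'
        refine ⟨hab', ?_⟩
        rw [hmb']
        exact le_min (le_refl _) (by linarith)
      -- strict increase
      obtain ⟨ρ, hρ, c, hc, hloc'⟩ := hloc t₁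
      set b'' := min t₂ (t₁ + ρ) with hb''
      have hb''1 : t₁ < b'' := lt_min hlt (by linarith)
      have h1 := hloc' t₁ b'' (by linarith) hb''1.le (min_le_right _ _)
      have h2 : 0 < c * (b'' - t₁) := mul_pos hc (by linarith)
      have h3 : f b'' ≤ f t₂ := hmono b'' t₂ (min_le_left _ _)
      show f t₁ < f t₂
      linarith
    -- FTC for the curve components
    have hγcont : ContinuousOn γ (Icc a b) := fun t ht => (hγd t ht).continuousWithinAt
    have hIoi : ∀ x ∈ Ioo a b, Icc a b ∈ 𝓝[>] x := fun x hx =>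
      Icc_mem_nhdsGT_of_mem ⟨hx.1.le, hx.2⟩
    have hint1 : IntervalIntegrable (fun t => (γ' t).1) volume a b := by
      apply ContinuousOn.intervalIntegrable
      rw [uIcc_of_le hab.le]
      exact continuous_fst.comp_continuousOn hγ'c
    have hint2 : IntervalIntegrable (fun t => (γ' t).2) volume a b := by
      apply ContinuousOn.intervalIntegrable
      rw [uIcc_of_le hab.le]
      exact continuous_snd.comp_continuousOn hγ'c
    have hint2' : IntervalIntegrable (fun t => |(γ' t).2|) volume a b := by
      apply ContinuousOn.intervalIntegrable
      rw [uIcc_of_le hab.le]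
      exact (continuous_abs.comp continuous_snd).comp_continuousOn hγ'c
    have hFTC1 : ∫ t in a..b, (γ' t).1 = (γ b).1 - (γ a).1 := by
      apply intervalIntegral.integral_eq_sub_of_hasDeriv_right_of_le hab.le
        (continuous_fst.comp_continuousOn hγcont) _ hint1
      intro x hx
      have h := (hγd x (Ioo_subset_Icc_self hx)).mono_of_mem_nhdsWithin (hIoi x hx)
      exact ((ContinuousLinearMap.fst ℝ ℝ ℝ).hasFDerivAt).comp_hasDerivWithinAt x h
    have hFTC2 : ∫ t in a..b, (γ' t).2 = (γ b).2 - (γ a).2 := by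
      apply intervalIntegral.integral_eq_sub_of_hasDeriv_right_of_le hab.le
        (continuous_snd.comp_continuousOn hγcont) _ hint2
      intro x hx
      have h := (hγd x (Ioo_subset_Icc_self hx)).mono_of_mem_nhdsWithin (hIoi x hx)
      exact ((ContinuousLinearMap.snd ℝ ℝ ℝ).hasFDerivAt).comp_hasDerivWithinAt x h
    set H : ℝ := ∫ t in a..b, (γ' t).1 with hHdef
    set Kk : ℝ := ∫ t in a..b, (γ' t).2 with hKdef
    have hHpos : 0 < H := by
      apply intervalIntegral.intervalIntegral_pos_of_pos_on hint1 _ hab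
      intro x hx
      exact (hγcau x (Ioo_subset_Icc_self hx)).1
    have hKH : |Kk| ≤ H := by
      calc |Kk| ≤ ∫ t in a..b, |(γ' t).2| :=
            intervalIntegral.abs_integral_le_integral_abs hab.le
        _ ≤ H := by
            apply intervalIntegral.integral_mono_on hab.le hint2' hint1
            intro x hx
            exact (hγcau x hx).2
    set s : ℝ := Kk / H with hsdef
    have hs : |s| ≤ 1 := by
      rw [hsdef, abs_div, abs_of_pos hHpos, div_le_one hHpos]
      exact hKH
    have hsH : s * H = Kk := by
      rw [hsdef]; field_simp
    have hγb : γ b = ((γ a).1 + H, (γ a).2 + s * H) := by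
      rw [Prod.ext_iff]
      constructor
      · simp only []
        linarith [hFTC1]
      · simp only []
        rw [hsH]
        linarith [hFTC2]
    have hγa : γ a = ((γ a).1 + (0:ℝ), (γ a).2 + s * 0) := by
      rw [Prod.ext_iff]; constructor <;> simp
    have := hstrict s hs (γ a) 0 H hHpos
    rw [← hγa, ← hγb] at this
    exact this
  · -- reverse direction
    intro hcurve p hd
    have hdir : ∀ s' : ℝ, |s'| ≤ 1 → 0 ≤ fderiv ℝ u p (1, s') := by
      intro s' hs'
      have hmono : ∀ t : ℝ, 0 < t → u p < u (p.1 + t, p.2 + s' * t) := by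
        intro t ht
        have hder : ∀ r ∈ Icc (0:ℝ) t,
            HasDerivWithinAt (fun r : ℝ => ((p.1 + r, p.2 + s' * r) : ℝ × ℝ))
              ((1:ℝ), s') (Icc 0 t) r := by
          intro r _
          apply HasDerivAt.hasDerivWithinAt
          apply HasDerivAt.prodMk
          · simpa using (hasDerivAt_id r).const_add p.1
          · simpa using ((hasDerivAt_id r).const_mul s').const_add p.2
        have := hcurve 0 t ht (fun r => (p.1 + r, p.2 + s' * r)) (fun _ => (1, s'))
          continuousOn_const hder
          (fun r _ => ⟨one_pos, by simpa using hs'⟩)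
        simpa using this
      -- directional derivative as limit of positive slopes
      have hp0 : ((p.1 + (0:ℝ), p.2 + s' * 0) : ℝ × ℝ) = p := by simp
      have hD : HasDerivAt (fun t : ℝ => u (p.1 + t, p.2 + s' * t))
          (fderiv ℝ u p (1, s')) 0 := by
        have hinner : HasDerivAt (fun t : ℝ => ((p.1 + t, p.2 + s' * t) : ℝ × ℝ))
            ((1:ℝ), s') 0 := by
          apply HasDerivAt.prodMk
          · simpa using (hasDerivAt_id (0:ℝ)).const_add p.1
          · simpa using ((hasDerivAt_id (0:ℝ)).const_mul s').const_add p.2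
        have hfd : HasFDerivAt u (fderiv ℝ u p) ((p.1 + (0:ℝ), p.2 + s' * 0) : ℝ × ℝ) := by
          rw [hp0]; exact hd.hasFDerivAt
        exact hfd.comp_hasDerivAt 0 hinner
      have hslope := hasDerivAt_iff_tendsto_slope.1 hD
      have hright : Tendsto (slope (fun t : ℝ => u (p.1 + t, p.2 + s' * t)) 0) (𝓝[>] 0)
          (𝓝 (fderiv ℝ u p (1, s'))) :=
        hslope.mono_left (nhdsWithin_mono 0 (fun x hx => ne_of_gt hx))
      apply ge_of_tendsto hright
      filter_upwards [self_mem_nhdsWithin] with t ht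
      have h1 : u p < u (p.1 + t, p.2 + s' * t) := hmono t ht
      rw [slope_def_field]
      simp only [sub_zero, add_zero, mul_zero, Prod.mk.eta]
      apply div_nonneg (by linarith) ht.le
    have ha1 := hdir 1 (by norm_num)
    have ha2 := hdir (-1) (by norm_num)
    have hsplit : ∀ s' : ℝ, fderiv ℝ u p (1, s') =
        fderiv ℝ u p (1, 0) + s' * fderiv ℝ u p (0, 1) := by
      intro s'
      have h1 : ((1:ℝ), s') = ((1:ℝ), (0:ℝ)) + s' • ((0:ℝ), (1:ℝ)) := by
        simp [Prod.ext_iff]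
      rw [h1, map_add, _root_.map_smul, smul_eq_mul]
    rw [hsplit 1] at ha1
    rw [hsplit (-1)] at ha2
    have hab := visc_at_diff u hu hvisc hd
    nlinarith [hab, ha1, ha2]
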